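/- Let m > 0, let H : (0,∞) → ℝ be twice differentiable, set N(t) = exp((2/m) H(t)), I(t) = H'(t), and define the W-entropy W(t) = H(t) - (m/2) log(4πe t) + t H'(t) - m/2 (so that W(t) = (d/dt)(t (H(t) - (m/2) log(4πe t)))). Then W is differentiable on (0,∞) and for every t > 0 the NIW formula holds: N''(t) = (2 N(t)/m) [ (2/m)(I(t) - m/(2t))² + (1/t) W'(t) ]. -/

import Mathlib

open Real

/-- The NIW formula relating the Shannon entropy power `N = exp((2/m)H)`, the Fisher
information `I = H'` and the `W`-entropy `W(t) = (d/dt)(t(H(t) - (m/2)log(4πe t)))`: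
`N'' = (2N/m) [ (2/m)(I - m/(2t))² + (1/t) W' ]`. -/
theorem NIW_formula (m : ℝ) (hm : 0 < m) (H : ℝ → ℝ)
    (hH : ∀ t : ℝ, 0 < t → DifferentiableAt ℝ H t)
    (hH' : ∀ t : ℝ, 0 < t → DifferentiableAt ℝ (deriv H) t)
    (N I W : ℝ → ℝ)
    (hN : ∀ t : ℝ, N t = Real.exp ((2 / m) * H t))
    (hI : ∀ t : ℝ, I t = deriv H t)
    (hW : ∀ t : ℝ, W t =
      H t - (m / 2) * Real.log (4 * π * Real.exp 1 * t) + t * deriv H t - m / 2) :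
    ∀ t : ℝ, 0 < t →
      DifferentiableAt ℝ W t ∧
      deriv (deriv N) t =
        (2 * N t / m) *
          ((2 / m) * (I t - m / (2 * t)) ^ 2 + (1 / t) * deriv W t) := by
  intro t ht
  have hm' : m ≠ 0 := ne_of_gt hm
  have ht' : t ≠ 0 := ne_of_gt ht
  have hc : (0:ℝ) < 4 * π * Real.exp 1 := by positivity
  -- derivative of N at any s > 0
  have hNfun : N = fun s => Real.exp ((2 / m) * H s) := funext hN
  have hNder : ∀ s : ℝ, 0 < s → HasDerivAt N ((2 / m * deriv H s) * N s) s := by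
    intro s hs
    rw [hNfun]
    have h1 : HasDerivAt (fun x => (2 / m) * H x) (2 / m * deriv H s) s :=
      ((hH s hs).hasDerivAt).const_mul (2 / m)
    simpa [mul_comm] using h1.exp
  -- deriv N agrees with the explicit formula on Ioi 0
  have hEq : deriv N =ᶠ[nhds t] fun s => (2 / m * deriv H s) * N s := by
    filter_upwards [Ioi_mem_nhds ht] with s hs
    exact (hNder s hs).deriv
  -- second derivative of N at t
  have hN2 : HasDerivAt (fun s => (2 / m * deriv H s) * N s)
      ((2 / m * deriv (deriv H) t) * N t + (2 / m * deriv H t) * ((2 / m * deriv H t) * N t)) t := by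
    have h1 : HasDerivAt (fun s => 2 / m * deriv H s) (2 / m * deriv (deriv H) t) t :=
      ((hH' t ht).hasDerivAt).const_mul (2 / m)
    exact h1.mul (hNder t ht)
  have hderivN2 : deriv (deriv N) t =
      (2 / m * deriv (deriv H) t) * N t + (2 / m * deriv H t) * ((2 / m * deriv H t) * N t) := by
    rw [hEq.deriv_eq]
    exact hN2.deriv
  -- derivative of W at t
  have hWfun : W = fun s =>
      H s - (m / 2) * Real.log (4 * π * Real.exp 1 * s) + s * deriv H s - m / 2 :=
    funext hW
  have hlog : HasDerivAt (fun s : ℝ => Real.log (4 * π * Real.exp 1 * s)) (1 / t) t := by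
    have h1 : HasDerivAt (fun s : ℝ => 4 * π * Real.exp 1 * s) (4 * π * Real.exp 1) t := by
      simpa using (hasDerivAt_id t).const_mul (4 * π * Real.exp 1)
    have h2 := h1.log (by positivity)
    have : 4 * π * Real.exp 1 / (4 * π * Real.exp 1 * t) = 1 / t := by
      field_simp
    simpa [this] using h2
  have hWder : HasDerivAt W
      (deriv H t - (m / 2) * (1 / t) + (deriv H t + t * deriv (deriv H) t)) t := by
    rw [hWfun]
    have h1 : HasDerivAt (fun s => s * deriv H s) (1 * deriv H t + t * deriv (deriv H) t) t :=
      (hasDerivAt_id t).mul ((hH' t ht).hasDerivAt)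
    have h2 := (((hH t ht).hasDerivAt).sub (hlog.const_mul (m / 2))).add h1
    have h3 := h2.sub_const (m / 2)
    have e : deriv H t - (m / 2) * (1 / t) + (deriv H t + t * deriv (deriv H) t) =
        deriv H t - m / 2 * (1 / t) + (1 * deriv H t + t * deriv (deriv H) t) := by ring
    rw [e]
    exact h3
  refine ⟨hWder.differentiableAt, ?_⟩
  rw [hderivN2, hWder.deriv, hI]
  field_simp
  ring
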